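/- Stability of lift zonoids: let μ_D = Σ_{p∈D} a_p δ_p and μ_{D'} = Σ_{q∈D'} b_q δ_q be persistence diagrams (finite sets D, D' ⊂ {x<y} ⊂ R^2 with positive integer multiplicities), and let ω : R^2 → (0,1] be a stable weighting with constants C, C', i.e. p ↦ ω(p)(1,p) is C-Lipschitz and ‖ω(p)(1,p)‖_2 ≤ C'·(y−x)/2 for p = (x,y), x < y. Then the Hausdorff distance between the lift zonoids of the reweighted diagrams satisfies d_H(Z_{μ^ω_D}, Z_{μ^ω_{D'}}) ≤ √2·max{C, C'}·W_1(μ_D, μ_{D'}), where W_1 is the 1-Wasserstein distance between persistence diagrams (partial optimal transport with sup-norm ground cost and distance to the diagonal ‖p−Δ‖_∞ = (y−x)/2 for unmatched mass). -/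

import Mathlib

open Pointwise MeasureTheory Filter

/-- Support function of a set in a real inner product space. -/
noncomputable def suppFn {E : Type*} [NormedAddCommGroup E] [InnerProductSpace ℝ E]
    (A : Set E) (x : E) : ℝ :=
  sSup ((fun a => (inner ℝ x a : ℝ)) '' A)

/-- The lift of a planar point `p = (x, y)` to `(1, x, y) ∈ ℝ³` (Euclidean). -/
noncomputable def lift3 (p : ℝ × ℝ) : EuclideanSpace ℝ (Fin 3) := WithLp.toLp 2 ![1, p.1, p.2]

/-- Lift zonoid of a weighted finite set of planar points: the Minkowski sum of the
segments `w p • [0, (1,p)]`. -/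
noncomputable def liftZonoid (D : Finset (ℝ × ℝ)) (w : ℝ × ℝ → ℝ) :
    Set (EuclideanSpace ℝ (Fin 3)) :=
  ∑ p ∈ D, w p • segment ℝ (0 : EuclideanSpace ℝ (Fin 3)) (lift3 p)

/-- Persistence sphere (support function of the lift zonoid, explicit formula). -/
noncomputable def persSphere (D : Finset (ℝ × ℝ)) (w : ℝ × ℝ → ℝ)
    (v : EuclideanSpace ℝ (Fin 3)) : ℝ :=
  ∑ p ∈ D, w p * max 0 (inner ℝ v (lift3 p) : ℝ)

/-- Cost of a partial matching `γ` (defined on `S ⊆ D`, with image in `D'`) between the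
diagrams `(D, a)` and `(D', b)`.  Note that the norm on `ℝ × ℝ` is the sup-norm, and the
distance of `p = (x,y)` to the diagonal is `(y - x)/2`. -/
noncomputable def matchCost (D D' : Finset (ℝ × ℝ)) (a b : ℝ × ℝ → ℕ)
    (S : Finset (ℝ × ℝ)) (γ : ℝ × ℝ → ℝ × ℝ) : ℝ :=
  (∑ p ∈ S, (min (a p) (b (γ p)) : ℝ) * ‖p - γ p‖)
  + (∑ p ∈ S, ((a p : ℝ) - (min (a p) (b (γ p)) : ℝ)) * ((p.2 - p.1) / 2))
  + (∑ p ∈ S, ((b (γ p) : ℝ) - (min (a p) (b (γ p)) : ℝ)) * (((γ p).2 - (γ p).1) / 2))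
  + (∑ p ∈ D \ S, (a p : ℝ) * ((p.2 - p.1) / 2))
  + (∑ q ∈ D' \ S.image γ, (b q : ℝ) * ((q.2 - q.1) / 2))

/-- The 1-Wasserstein distance between persistence diagrams: infimum of matching costs
over all partial matchings. -/
noncomputable def W1 (D D' : Finset (ℝ × ℝ)) (a b : ℝ × ℝ → ℕ) : ℝ :=
  sInf { c : ℝ | ∃ (S : Finset (ℝ × ℝ)) (γ : ℝ × ℝ → ℝ × ℝ),
    S ⊆ D ∧ S.image γ ⊆ D' ∧ Set.InjOn γ ↑S ∧ c = matchCost D D' a b S γ }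

section aux

variable {E : Type*} [NormedAddCommGroup E] [NormedSpace ℝ E]

theorem myInfEdist_add_le (a b : E) (A' B' : Set E) :
    EMetric.infEdist (a + b) (A' + B') ≤ EMetric.infEdist a A' + EMetric.infEdist b B' := by
  conv_rhs => unfold EMetric.infEdist Metric.infEDist
  simp only [ENNReal.iInf_add, ENNReal.add_iInf]
  refine le_iInf fun y => le_iInf fun hy => le_iInf fun z => le_iInf fun hz => ?_
  exact (EMetric.infEdist_le_edist_of_mem (Set.add_mem_add hz hy)).trans
    (edist_add_add_le a b z y)

theorem myHausdorffEdist_add_le (A B A' B' : Set E) :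
    EMetric.hausdorffEdist (A + B) (A' + B') ≤
      EMetric.hausdorffEdist A A' + EMetric.hausdorffEdist B B' := by
  refine EMetric.hausdorffEdist_le_of_infEdist ?_ ?_
  · rintro x ⟨a, ha, b, hb, rfl⟩
    exact (myInfEdist_add_le a b A' B').trans
      (add_le_add (EMetric.infEdist_le_hausdorffEdist_of_mem ha)
        (EMetric.infEdist_le_hausdorffEdist_of_mem hb))
  · rintro x ⟨a, ha, b, hb, rfl⟩
    refine (myInfEdist_add_le a b A B).trans (add_le_add ?_ ?_)
    · unfold EMetric.hausdorffEdist
      rw [EMetric.hausdorffEdist_comm]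
      exact EMetric.infEdist_le_hausdorffEdist_of_mem ha
    · unfold EMetric.hausdorffEdist
      rw [EMetric.hausdorffEdist_comm]
      exact EMetric.infEdist_le_hausdorffEdist_of_mem hb

theorem myHausdorffEdist_sum_le {ι : Type*} (s : Finset ι) (A B : ι → Set E) :
    EMetric.hausdorffEdist (∑ i ∈ s, A i) (∑ i ∈ s, B i) ≤
      ∑ i ∈ s, EMetric.hausdorffEdist (A i) (B i) := by
  induction s using Finset.cons_induction with
  | empty => simp [EMetric.hausdorffEdist, EMetric.hausdorffEdist_self]
  | cons i s hi ih =>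
    simp only [Finset.sum_cons]
    exact (myHausdorffEdist_add_le _ _ _ _).trans (add_le_add le_rfl ih)

theorem myInfEdist_segment_le (u v : E) {x : E} (hx : x ∈ segment ℝ (0 : E) u) :
    EMetric.infEdist x (segment ℝ (0 : E) v) ≤ edist u v := by
  rw [segment_eq_image] at hx
  obtain ⟨t, ht, rfl⟩ := hx
  have hv : (1 - t) • (0 : E) + t • v ∈ segment ℝ (0 : E) v := by
    rw [segment_eq_image]; exact ⟨t, ht, rfl⟩
  refine (EMetric.infEdist_le_edist_of_mem hv).trans ?_
  simp only [smul_zero, zero_add, edist_dist]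
  refine ENNReal.ofReal_le_ofReal ?_
  rw [dist_smul₀]
  have h1 : ‖t‖ ≤ 1 := by rw [Real.norm_eq_abs, abs_of_nonneg ht.1]; exact ht.2
  calc ‖t‖ * dist u v ≤ 1 * dist u v := mul_le_mul_of_nonneg_right h1 dist_nonneg
    _ = dist u v := one_mul _

theorem myHausdorffEdist_segment_le (u v : E) :
    EMetric.hausdorffEdist (segment ℝ (0 : E) u) (segment ℝ (0 : E) v) ≤ edist u v :=
  EMetric.hausdorffEdist_le_of_infEdist
    (fun _ hx => myInfEdist_segment_le u v hx)
    (fun _ hx => (myInfEdist_segment_le v u hx).trans_eq (edist_comm v u))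

theorem mySmulSeg (c : ℝ) (u : E) : c • segment ℝ (0 : E) u = segment ℝ (0 : E) (c • u) := by
  have := image_segment ℝ ((LinearMap.lsmul ℝ E c).toAffineMap) 0 u
  simp at this
  rw [← this]; rfl

theorem myZeroSeg : (0 : Set E) = segment ℝ (0 : E) 0 := by
  rw [segment_same]; exact Set.singleton_zero.symm

end aux

/-- The single segment of a reweighted diagram point. -/
noncomputable def segA (ω : ℝ × ℝ → ℝ) (a : ℝ × ℝ → ℕ) (p : ℝ × ℝ) :
    Set (EuclideanSpace ℝ (Fin 3)) :=
  segment ℝ 0 ((ω p * (a p : ℝ)) • lift3 p)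

theorem liftZonoid_eq (D : Finset (ℝ × ℝ)) (ω : ℝ × ℝ → ℝ) (a : ℝ × ℝ → ℕ) :
    liftZonoid D (fun p => ω p * (a p : ℝ)) = ∑ p ∈ D, segA ω a p := by
  unfold liftZonoid segA
  exact Finset.sum_congr rfl fun p _ => mySmulSeg _ _

theorem sqrt_sq_add_sq_le (p q : ℝ × ℝ) :
    Real.sqrt ((p.1 - q.1) ^ 2 + (p.2 - q.2) ^ 2) ≤ Real.sqrt 2 * ‖p - q‖ := by
  have hnorm : ‖p - q‖ = max |p.1 - q.1| |p.2 - q.2| := by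
    simp [Prod.norm_def, Real.norm_eq_abs]
  set M := max |p.1 - q.1| |p.2 - q.2| with hM
  have hM0 : 0 ≤ M := le_trans (abs_nonneg _) (le_max_left _ _)
  have h1 : |p.1 - q.1| ≤ M := le_max_left _ _
  have h2 : |p.2 - q.2| ≤ M := le_max_right _ _
  have hle : (p.1 - q.1) ^ 2 + (p.2 - q.2) ^ 2 ≤ 2 * M ^ 2 := by
    nlinarith [sq_abs (p.1 - q.1), sq_abs (p.2 - q.2), abs_nonneg (p.1 - q.1),
      abs_nonneg (p.2 - q.2)]
  calc Real.sqrt ((p.1 - q.1) ^ 2 + (p.2 - q.2) ^ 2) ≤ Real.sqrt (2 * M ^ 2) :=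
        Real.sqrt_le_sqrt hle
    _ = Real.sqrt 2 * M := by
        rw [Real.sqrt_mul (by norm_num : (0:ℝ) ≤ 2), Real.sqrt_sq hM0]
    _ = Real.sqrt 2 * ‖p - q‖ := by rw [hnorm]

/-- stability of lift zonoids of reweighted persistence diagrams with
respect to the 1-Wasserstein distance, for a stable weighting `ω` with constants `C, C'`. -/
theorem liftZonoid_stability
    (ω : ℝ × ℝ → ℝ) (hω : ∀ p, ω p ∈ Set.Ioc (0 : ℝ) 1)
    (C C' : ℝ) (hC : 0 < C) (hC' : 0 < C')
    (hLip : ∀ p q : ℝ × ℝ,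
      ‖ω p • lift3 p - ω q • lift3 q‖ ≤ C * Real.sqrt ((p.1 - q.1) ^ 2 + (p.2 - q.2) ^ 2))
    (hNorm : ∀ p : ℝ × ℝ, p.1 < p.2 → ‖ω p • lift3 p‖ ≤ C' * ((p.2 - p.1) / 2))
    (D D' : Finset (ℝ × ℝ)) (a b : ℝ × ℝ → ℕ)
    (hD : ∀ p ∈ D, p.1 < p.2) (hD' : ∀ q ∈ D', q.1 < q.2)
    (ha : ∀ p ∈ D, 0 < a p) (hb : ∀ q ∈ D', 0 < b q) :
    Metric.hausdorffDist
        (liftZonoid D (fun p => ω p * (a p : ℝ)))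
        (liftZonoid D' (fun q => ω q * (b q : ℝ)))
      ≤ Real.sqrt 2 * max C C' * W1 D D' a b := by
  classical
  set K : ℝ := Real.sqrt 2 * max C C' with hKdef
  have hs2 : (1 : ℝ) ≤ Real.sqrt 2 := by
    rw [← Real.sqrt_one]; exact Real.sqrt_le_sqrt (by norm_num)
  have hK : 0 < K := by
    have : (0:ℝ) < max C C' := lt_max_iff.mpr (Or.inl hC)
    have h2 : (0:ℝ) < Real.sqrt 2 := by positivity
    exact mul_pos h2 this
  have hCK : Real.sqrt 2 * C ≤ K := by
    rw [hKdef]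
    exact mul_le_mul_of_nonneg_left (le_max_left _ _) (Real.sqrt_nonneg 2)
  have hC'K : C' ≤ K := by
    rw [hKdef]
    calc C' = 1 * C' := (one_mul C').symm
      _ ≤ Real.sqrt 2 * max C C' :=
        mul_le_mul hs2 (le_max_right C C') hC'.le (Real.sqrt_nonneg 2)
  have hdp : ∀ p ∈ D, (0:ℝ) ≤ (p.2 - p.1) / 2 := fun p hp => by linarith [hD p hp]
  have hdq : ∀ q ∈ D', (0:ℝ) ≤ (q.2 - q.1) / 2 := fun q hq => by linarith [hD' q hq]
  -- key bound for a fixed partial matching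
  have key : ∀ (S : Finset (ℝ × ℝ)) (γ : ℝ × ℝ → ℝ × ℝ), S ⊆ D → S.image γ ⊆ D' →
      Set.InjOn γ ↑S →
      Metric.hausdorffDist
        (liftZonoid D (fun p => ω p * (a p : ℝ)))
        (liftZonoid D' (fun q => ω q * (b q : ℝ)))
      ≤ K * matchCost D D' a b S γ := by
    intro S γ hS hT hinj
    have hZD : liftZonoid D (fun p => ω p * (a p : ℝ))
        = (∑ p ∈ S, segA ω a p) + ((∑ p ∈ D \ S, segA ω a p)
            + (0 : Set (EuclideanSpace ℝ (Fin 3)))) := by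
      rw [liftZonoid_eq, ← Finset.sum_sdiff hS, add_zero, add_comm]
    have hZD' : liftZonoid D' (fun q => ω q * (b q : ℝ))
        = (∑ p ∈ S, segA ω b (γ p)) + (((0 : Set (EuclideanSpace ℝ (Fin 3))))
            + ∑ q ∈ D' \ S.image γ, segA ω b q) := by
      rw [liftZonoid_eq, ← Finset.sum_sdiff hT, zero_add, add_comm]
      congr 1
      exact Finset.sum_image fun x hx y hy h => hinj hx hy h
    -- per-pair bound
    have hpair : ∀ p ∈ S, EMetric.hausdorffEdist (segA ω a p) (segA ω b (γ p))
        ≤ ENNReal.ofReal (K * ((min (a p) (b (γ p)) : ℝ) * ‖p - γ p‖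
            + ((a p : ℝ) - (min (a p) (b (γ p)) : ℝ)) * ((p.2 - p.1) / 2)
            + ((b (γ p) : ℝ) - (min (a p) (b (γ p)) : ℝ)) * (((γ p).2 - (γ p).1) / 2))) := by
      intro p hp
      have hpD : p ∈ D := hS hp
      have hqD' : γ p ∈ D' := hT (Finset.mem_image_of_mem γ hp)
      set q := γ p with hq
      set m : ℝ := min (a p : ℝ) (b q : ℝ) with hm
      have hm0 : (0:ℝ) ≤ m := le_min (Nat.cast_nonneg _) (Nat.cast_nonneg _)
      have hma : m ≤ (a p : ℝ) := min_le_left _ _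
      have hmb : m ≤ (b q : ℝ) := min_le_right _ _
      simp only [segA]
      refine (myHausdorffEdist_segment_le _ _).trans ?_
      rw [edist_dist, dist_eq_norm]
      refine ENNReal.ofReal_le_ofReal ?_
      have hsplit : (ω p * (a p : ℝ)) • lift3 p - (ω q * (b q : ℝ)) • lift3 q
          = m • (ω p • lift3 p - ω q • lift3 q)
            + (((a p : ℝ) - m) • (ω p • lift3 p) - ((b q : ℝ) - m) • (ω q • lift3 q)) := by
        module
      rw [hsplit]
      have step1 : ‖ω p • lift3 p - ω q • lift3 q‖ ≤ C * (Real.sqrt 2 * ‖p - q‖) :=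
        (hLip p q).trans (mul_le_mul_of_nonneg_left (sqrt_sq_add_sq_le p q) hC.le)
      have step2 : ‖ω p • lift3 p‖ ≤ C' * ((p.2 - p.1) / 2) := hNorm p (hD p hpD)
      have step3 : ‖ω q • lift3 q‖ ≤ C' * ((q.2 - q.1) / 2) := hNorm q (hD' q hqD')
      have tri : ‖m • (ω p • lift3 p - ω q • lift3 q)
            + (((a p : ℝ) - m) • (ω p • lift3 p) - ((b q : ℝ) - m) • (ω q • lift3 q))‖
          ≤ m * ‖ω p • lift3 p - ω q • lift3 q‖
            + (((a p : ℝ) - m) * ‖ω p • lift3 p‖ + ((b q : ℝ) - m) * ‖ω q • lift3 q‖) := by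
        refine (norm_add_le _ _).trans
          (add_le_add ?_ ((norm_sub_le _ _).trans (add_le_add ?_ ?_))) <;>
          rw [norm_smul, Real.norm_eq_abs]
        · rw [abs_of_nonneg hm0]
        · rw [abs_of_nonneg (by linarith)]
        · rw [abs_of_nonneg (by linarith)]
      refine tri.trans ?_
      have hdp0 : (0:ℝ) ≤ (p.2 - p.1) / 2 := hdp p hpD
      have hdq0 : (0:ℝ) ≤ (q.2 - q.1) / 2 := hdq q hqD'
      have B1 : m * ‖ω p • lift3 p - ω q • lift3 q‖ ≤ K * (m * ‖p - q‖) := by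
        calc m * ‖ω p • lift3 p - ω q • lift3 q‖
            ≤ m * (C * (Real.sqrt 2 * ‖p - q‖)) := mul_le_mul_of_nonneg_left step1 hm0
          _ = (Real.sqrt 2 * C) * (m * ‖p - q‖) := by ring
          _ ≤ K * (m * ‖p - q‖) :=
            mul_le_mul_of_nonneg_right hCK (by positivity)
      have B2 : ((a p : ℝ) - m) * ‖ω p • lift3 p‖ ≤ K * (((a p : ℝ) - m) * ((p.2 - p.1) / 2)) := by
        calc ((a p : ℝ) - m) * ‖ω p • lift3 p‖
            ≤ ((a p : ℝ) - m) * (C' * ((p.2 - p.1) / 2)) :=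
              mul_le_mul_of_nonneg_left step2 (by linarith)
          _ = C' * (((a p : ℝ) - m) * ((p.2 - p.1) / 2)) := by ring
          _ ≤ K * (((a p : ℝ) - m) * ((p.2 - p.1) / 2)) :=
              mul_le_mul_of_nonneg_right hC'K (mul_nonneg (by linarith) hdp0)
      have B3 : ((b q : ℝ) - m) * ‖ω q • lift3 q‖ ≤ K * (((b q : ℝ) - m) * ((q.2 - q.1) / 2)) := by
        calc ((b q : ℝ) - m) * ‖ω q • lift3 q‖
            ≤ ((b q : ℝ) - m) * (C' * ((q.2 - q.1) / 2)) :=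
              mul_le_mul_of_nonneg_left step3 (by linarith)
          _ = C' * (((b q : ℝ) - m) * ((q.2 - q.1) / 2)) := by ring
          _ ≤ K * (((b q : ℝ) - m) * ((q.2 - q.1) / 2)) :=
              mul_le_mul_of_nonneg_right hC'K (mul_nonneg (by linarith) hdq0)
      rw [mul_add, mul_add]
      linarith [B1, B2, B3]
    -- unmatched bounds
    have hleft : ∀ p ∈ D \ S, EMetric.hausdorffEdist (segA ω a p)
          (0 : Set (EuclideanSpace ℝ (Fin 3)))
        ≤ ENNReal.ofReal (K * ((a p : ℝ) * ((p.2 - p.1) / 2))) := by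
      intro p hp
      have hpD : p ∈ D := (Finset.mem_sdiff.mp hp).1
      rw [myZeroSeg]
      simp only [segA]
      refine (myHausdorffEdist_segment_le _ _).trans ?_
      rw [edist_dist, dist_zero_right]
      refine ENNReal.ofReal_le_ofReal ?_
      have hnn : ‖(ω p * (a p : ℝ)) • lift3 p‖ = (a p : ℝ) * ‖ω p • lift3 p‖ := by
        rw [mul_comm, mul_smul, norm_smul, Real.norm_eq_abs, abs_of_nonneg (Nat.cast_nonneg _)]
      rw [hnn]
      calc (a p : ℝ) * ‖ω p • lift3 p‖
          ≤ (a p : ℝ) * (C' * ((p.2 - p.1) / 2)) :=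
            mul_le_mul_of_nonneg_left (hNorm p (hD p hpD)) (Nat.cast_nonneg _)
        _ = C' * ((a p : ℝ) * ((p.2 - p.1) / 2)) := by ring
        _ ≤ K * ((a p : ℝ) * ((p.2 - p.1) / 2)) :=
            mul_le_mul_of_nonneg_right hC'K (mul_nonneg (Nat.cast_nonneg _) (hdp p hpD))
    have hright : ∀ q ∈ D' \ S.image γ, EMetric.hausdorffEdist
          ((0 : Set (EuclideanSpace ℝ (Fin 3)))) (segA ω b q)
        ≤ ENNReal.ofReal (K * ((b q : ℝ) * ((q.2 - q.1) / 2))) := by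
      intro qq hqq
      have hqD' : qq ∈ D' := (Finset.mem_sdiff.mp hqq).1
      unfold EMetric.hausdorffEdist
      rw [EMetric.hausdorffEdist_comm, myZeroSeg]
      simp only [segA]
      refine (myHausdorffEdist_segment_le _ _).trans ?_
      rw [edist_dist, dist_zero_right]
      refine ENNReal.ofReal_le_ofReal ?_
      have hnn : ‖(ω qq * (b qq : ℝ)) • lift3 qq‖ = (b qq : ℝ) * ‖ω qq • lift3 qq‖ := by
        rw [mul_comm, mul_smul, norm_smul, Real.norm_eq_abs, abs_of_nonneg (Nat.cast_nonneg _)]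
      rw [hnn]
      calc (b qq : ℝ) * ‖ω qq • lift3 qq‖
          ≤ (b qq : ℝ) * (C' * ((qq.2 - qq.1) / 2)) :=
            mul_le_mul_of_nonneg_left (hNorm qq (hD' qq hqD')) (Nat.cast_nonneg _)
        _ = C' * ((b qq : ℝ) * ((qq.2 - qq.1) / 2)) := by ring
        _ ≤ K * ((b qq : ℝ) * ((qq.2 - qq.1) / 2)) :=
            mul_le_mul_of_nonneg_right hC'K (mul_nonneg (Nat.cast_nonneg _) (hdq qq hqD'))
    -- nonnegativity of the real bound terms
    have n1 : ∀ p ∈ S, (0:ℝ) ≤ K * ((min (a p) (b (γ p)) : ℝ) * ‖p - γ p‖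
        + ((a p : ℝ) - (min (a p) (b (γ p)) : ℝ)) * ((p.2 - p.1) / 2)
        + ((b (γ p) : ℝ) - (min (a p) (b (γ p)) : ℝ)) * (((γ p).2 - (γ p).1) / 2)) := by
      intro p hp
      have h1 : (0:ℝ) ≤ (min (a p) (b (γ p)) : ℝ) * ‖p - γ p‖ := by positivity
      have h2 : (0:ℝ) ≤ ((a p : ℝ) - (min (a p) (b (γ p)) : ℝ)) * ((p.2 - p.1) / 2) :=
        mul_nonneg (sub_nonneg.mpr (min_le_left _ _)) (hdp p (hS hp))
      have h3 : (0:ℝ) ≤ ((b (γ p) : ℝ) - (min (a p) (b (γ p)) : ℝ)) * (((γ p).2 - (γ p).1) / 2) :=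
        mul_nonneg (sub_nonneg.mpr (min_le_right _ _))
          (hdq (γ p) (hT (Finset.mem_image_of_mem γ hp)))
      have := add_nonneg (add_nonneg h1 h2) h3
      positivity
    have n2 : ∀ p ∈ D \ S, (0:ℝ) ≤ K * ((a p : ℝ) * ((p.2 - p.1) / 2)) := by
      intro p hp
      have := mul_nonneg (Nat.cast_nonneg (a p)) (hdp p (Finset.mem_sdiff.mp hp).1)
      positivity
    have n3 : ∀ q ∈ D' \ S.image γ, (0:ℝ) ≤ K * ((b q : ℝ) * ((q.2 - q.1) / 2)) := by
      intro q hq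
      have := mul_nonneg (Nat.cast_nonneg (b q)) (hdq q (Finset.mem_sdiff.mp hq).1)
      positivity
    -- total edistance bound
    have hED : EMetric.hausdorffEdist
        (liftZonoid D (fun p => ω p * (a p : ℝ)))
        (liftZonoid D' (fun q => ω q * (b q : ℝ)))
        ≤ ENNReal.ofReal (K * matchCost D D' a b S γ) := by
      rw [hZD, hZD']
      refine le_trans ((myHausdorffEdist_add_le _ _ _ _).trans
        (add_le_add le_rfl (myHausdorffEdist_add_le _ _ _ _))) ?_
      have s1 : EMetric.hausdorffEdist (∑ p ∈ S, segA ω a p) (∑ p ∈ S, segA ω b (γ p))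
          ≤ ENNReal.ofReal (∑ p ∈ S, K * ((min (a p) (b (γ p)) : ℝ) * ‖p - γ p‖
            + ((a p : ℝ) - (min (a p) (b (γ p)) : ℝ)) * ((p.2 - p.1) / 2)
            + ((b (γ p) : ℝ) - (min (a p) (b (γ p)) : ℝ)) * (((γ p).2 - (γ p).1) / 2))) := by
        rw [ENNReal.ofReal_sum_of_nonneg n1]
        exact (myHausdorffEdist_sum_le S _ _).trans (Finset.sum_le_sum hpair)
      have s2 : EMetric.hausdorffEdist (∑ p ∈ D \ S, segA ω a p)
            (0 : Set (EuclideanSpace ℝ (Fin 3)))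
          ≤ ENNReal.ofReal (∑ p ∈ D \ S, K * ((a p : ℝ) * ((p.2 - p.1) / 2))) := by
        rw [ENNReal.ofReal_sum_of_nonneg n2]
        refine le_trans ?_ (Finset.sum_le_sum hleft)
        simpa using myHausdorffEdist_sum_le (D \ S) (segA ω a) (fun _ => 0)
      have s3 : EMetric.hausdorffEdist (0 : Set (EuclideanSpace ℝ (Fin 3)))
            (∑ q ∈ D' \ S.image γ, segA ω b q)
          ≤ ENNReal.ofReal (∑ q ∈ D' \ S.image γ, K * ((b q : ℝ) * ((q.2 - q.1) / 2))) := by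
        rw [ENNReal.ofReal_sum_of_nonneg n3]
        refine le_trans ?_ (Finset.sum_le_sum hright)
        simpa using myHausdorffEdist_sum_le (D' \ S.image γ) (fun _ => 0) (segA ω b)
      refine le_trans (add_le_add s1 (add_le_add s2 s3)) ?_
      rw [← ENNReal.ofReal_add (Finset.sum_nonneg n2) (Finset.sum_nonneg n3),
        ← ENNReal.ofReal_add (Finset.sum_nonneg n1)
          (add_nonneg (Finset.sum_nonneg n2) (Finset.sum_nonneg n3))]
      refine ENNReal.ofReal_le_ofReal (le_of_eq ?_)
      unfold matchCost
      simp only [mul_add, Finset.sum_add_distrib, Finset.mul_sum]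
      ring
    have hcost0 : 0 ≤ matchCost D D' a b S γ := by
      have h1 := Finset.sum_nonneg n1
      have h2 := Finset.sum_nonneg n2
      have h3 := Finset.sum_nonneg n3
      have heq : (∑ p ∈ S, K * ((min (a p) (b (γ p)) : ℝ) * ‖p - γ p‖
            + ((a p : ℝ) - (min (a p) (b (γ p)) : ℝ)) * ((p.2 - p.1) / 2)
            + ((b (γ p) : ℝ) - (min (a p) (b (γ p)) : ℝ)) * (((γ p).2 - (γ p).1) / 2)))
          + (∑ p ∈ D \ S, K * ((a p : ℝ) * ((p.2 - p.1) / 2)))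
          + (∑ q ∈ D' \ S.image γ, K * ((b q : ℝ) * ((q.2 - q.1) / 2)))
          = K * matchCost D D' a b S γ := by
        unfold matchCost
        simp only [mul_add, Finset.sum_add_distrib, Finset.mul_sum]
        try ring
      nlinarith [h1, h2, h3, hK]
    have := ENNReal.toReal_le_of_le_ofReal (mul_nonneg hK.le hcost0) hED
    exact this
  -- conclude by taking the infimum
  have hne : { c : ℝ | ∃ (S : Finset (ℝ × ℝ)) (γ : ℝ × ℝ → ℝ × ℝ),
      S ⊆ D ∧ S.image γ ⊆ D' ∧ Set.InjOn γ ↑S ∧ c = matchCost D D' a b S γ }.Nonempty :=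
    ⟨matchCost D D' a b ∅ id, ∅, id, Finset.empty_subset _, by simp, by simp, rfl⟩
  have hInf : Metric.hausdorffDist
      (liftZonoid D (fun p => ω p * (a p : ℝ)))
      (liftZonoid D' (fun q => ω q * (b q : ℝ))) / K ≤ W1 D D' a b := by
    rw [W1]
    refine le_csInf hne ?_
    rintro c ⟨S, γ, h1, h2, h3, rfl⟩
    rw [div_le_iff₀ hK]
    calc Metric.hausdorffDist _ _ ≤ K * matchCost D D' a b S γ := key S γ h1 h2 h3
      _ = matchCost D D' a b S γ * K := mul_comm _ _
  have hfinal := mul_le_mul_of_nonneg_right hInf hK.le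
  rw [div_mul_cancel₀ _ hK.ne'] at hfinal
  linarith [hfinal]
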